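/- Let c ∈ ℂ with c ≠ 0 and let A = ℂ[X]/(X² − c), the Clifford algebra over ℂ on one generator x with relation x² = c. Regard A as a module over the enveloping algebra A ⊗_ℂ A via the multiplication map A ⊗_ℂ A → A, (a ⊗ b)·m = a·m·b. Then A is projective as an A ⊗_ℂ A-module. -/

import Mathlib

open Polynomial TensorProduct

set_option maxHeartbeats 1000000
set_option synthInstance.maxHeartbeats 1000000

/-- The Clifford algebra `ℂ⟨x⟩/(x² = c)` on one generator. -/
abbrev Cliff (c : ℂ) : Type :=
  Polynomial ℂ ⧸ Ideal.span {(X ^ 2 - Polynomial.C c : Polynomial ℂ)}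

/-- `A` as a module over its enveloping algebra `A ⊗[ℂ] A` via the
multiplication map `(a ⊗ b) • m = a·m·b`. -/
noncomputable instance (c : ℂ) : Module (Cliff c ⊗[ℂ] Cliff c) (Cliff c) :=
  Module.compHom _ (Algebra.TensorProduct.lmul' ℂ (S := Cliff c)).toRingHom

namespace CliffAux

noncomputable instance (c : ℂ) : Distrib (Cliff c ⊗[ℂ] Cliff c) := by
  have h : CommRing (Cliff c ⊗[ℂ] Cliff c) := inferInstance
  exact inferInstance

instance (c : ℂ) : RightDistribClass (Cliff c ⊗[ℂ] Cliff c) :=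
  ⟨fun a b d => by ring⟩

variable (c : ℂ)

noncomputable def x : Cliff c := Ideal.Quotient.mk _ X

lemma x_sq : x c * x c = algebraMap ℂ (Cliff c) c := by
  have h0 : (Ideal.Quotient.mk (Ideal.span {(X ^ 2 - Polynomial.C c : Polynomial ℂ)})) (X^2 - Polynomial.C c) = 0 :=
    Ideal.Quotient.eq_zero_iff_mem.mpr (Ideal.subset_span rfl)
  have h2 : (Ideal.Quotient.mk (Ideal.span {(X ^ 2 - Polynomial.C c : Polynomial ℂ)})) (X^2) =
      (Ideal.Quotient.mk _) (Polynomial.C c) := by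
    rw [← sub_eq_zero, ← map_sub]; exact h0
  calc x c * x c = Ideal.Quotient.mk _ (X^2) := by
        rw [x, ← map_mul]; exact congrArg _ (pow_two (X : Polynomial ℂ)).symm
    _ = Ideal.Quotient.mk _ (Polynomial.C c) := h2
    _ = algebraMap ℂ (Cliff c) c := rfl

lemma x_sq' : x c * x c = c • (1 : Cliff c) := by
  rw [x_sq, Algebra.algebraMap_eq_smul_one]

noncomputable def e : Cliff c ⊗[ℂ] Cliff c :=
  (2*c)⁻¹ • (x c ⊗ₜ x c) + (2:ℂ)⁻¹ • (1 ⊗ₜ 1)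

lemma x_swap (hc : c ≠ 0) : (x c ⊗ₜ[ℂ] 1) * e c = ((1 : Cliff c) ⊗ₜ x c) * e c := by
  have hs : ((2*c)⁻¹ * c) = (2:ℂ)⁻¹ := by field_simp
  have h1 : (x c ⊗ₜ[ℂ] (1:Cliff c)) * (x c ⊗ₜ x c) = c • ((1:Cliff c) ⊗ₜ x c) := by
    rw [Algebra.TensorProduct.tmul_mul_tmul, one_mul, x_sq' c, smul_tmul']
  have h2 : ((1:Cliff c) ⊗ₜ[ℂ] x c) * (x c ⊗ₜ x c) = c • (x c ⊗ₜ[ℂ] (1:Cliff c)) := by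
    rw [Algebra.TensorProduct.tmul_mul_tmul, one_mul, x_sq' c, tmul_smul]
  have h3 : (x c ⊗ₜ[ℂ] (1:Cliff c)) * ((1:Cliff c) ⊗ₜ 1) = x c ⊗ₜ[ℂ] (1:Cliff c) := by
    rw [Algebra.TensorProduct.tmul_mul_tmul, one_mul, mul_one]
  have h4 : ((1:Cliff c) ⊗ₜ[ℂ] x c) * ((1:Cliff c) ⊗ₜ 1) = (1:Cliff c) ⊗ₜ[ℂ] x c := by
    rw [Algebra.TensorProduct.tmul_mul_tmul, one_mul, mul_one]
  rw [e, mul_add, mul_add, mul_smul_comm, mul_smul_comm, mul_smul_comm, mul_smul_comm,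
    h1, h2, h3, h4, smul_smul, smul_smul, hs, add_comm]

lemma swap (hc : c ≠ 0) (b : Cliff c) :
    (b ⊗ₜ[ℂ] 1) * e c = ((1 : Cliff c) ⊗ₜ b) * e c := by
  have key : ∀ n : ℕ, (((x c)^n) ⊗ₜ[ℂ] (1:Cliff c)) * e c = ((1:Cliff c) ⊗ₜ ((x c)^n)) * e c := by
    intro n
    induction n with
    | zero => simp
    | succ n ih =>
      have h1 : (((x c)^(n+1)) ⊗ₜ[ℂ] (1:Cliff c)) = (((x c)^n) ⊗ₜ[ℂ] (1:Cliff c)) * (x c ⊗ₜ 1) := by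
        rw [Algebra.TensorProduct.tmul_mul_tmul]
        exact congrArg₂ (· ⊗ₜ[ℂ] ·) (pow_succ _ _) (mul_one 1).symm
      have h2 : ((1:Cliff c) ⊗ₜ[ℂ] ((x c)^(n+1))) = ((1:Cliff c) ⊗ₜ[ℂ] ((x c)^n)) * (1 ⊗ₜ x c) := by
        rw [Algebra.TensorProduct.tmul_mul_tmul]
        exact congrArg₂ (· ⊗ₜ[ℂ] ·) (mul_one 1).symm (pow_succ _ _)
      calc (((x c)^(n+1)) ⊗ₜ[ℂ] (1:Cliff c)) * e c
          = (((x c)^n) ⊗ₜ[ℂ] (1:Cliff c)) * ((x c ⊗ₜ 1) * e c) := by rw [h1]; ring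
        _ = (((x c)^n) ⊗ₜ[ℂ] (1:Cliff c)) * ((1 ⊗ₜ x c) * e c) := by rw [x_swap c hc]
        _ = ((1:Cliff c) ⊗ₜ x c) * ((((x c)^n) ⊗ₜ (1:Cliff c)) * e c) := by ring
        _ = ((1:Cliff c) ⊗ₜ x c) * (((1:Cliff c) ⊗ₜ ((x c)^n)) * e c) := by rw [ih]
        _ = ((1:Cliff c) ⊗ₜ[ℂ] ((x c)^(n+1))) * e c := by rw [h2]; ring
  obtain ⟨p, rfl⟩ := Ideal.Quotient.mk_surjective b
  induction p using Polynomial.induction_on' with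
  | add p q hp hq =>
    rw [map_add, add_tmul, tmul_add, add_mul, add_mul, hp, hq]
  | monomial n a =>
    have hm : (Ideal.Quotient.mk (Ideal.span {(X ^ 2 - Polynomial.C c : Polynomial ℂ)}))
        (Polynomial.monomial n a) = a • (x c)^n := by
      rw [← Polynomial.C_mul_X_pow_eq_monomial, map_mul, map_pow]
      rw [show (Ideal.Quotient.mk (Ideal.span {(X ^ 2 - Polynomial.C c : Polynomial ℂ)}))
        (Polynomial.C a) = algebraMap ℂ (Cliff c) a from rfl, ← Algebra.smul_def]
      rfl
    rw [hm]
    have hl : ((a • (x c)^n) ⊗ₜ[ℂ] (1:Cliff c)) = a • (((x c)^n) ⊗ₜ[ℂ] (1:Cliff c)) :=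
      TensorProduct.smul_tmul' a _ _
    have hr : ((1:Cliff c) ⊗ₜ[ℂ] (a • (x c)^n)) = a • ((1:Cliff c) ⊗ₜ[ℂ] ((x c)^n)) :=
      TensorProduct.tmul_smul a _ _
    rw [hl, hr, smul_mul_assoc, smul_mul_assoc]
    congr 1
    exact key n

lemma lmul'_e (hc : c ≠ 0) : Algebra.TensorProduct.lmul' ℂ (S := Cliff c) (e c) = 1 := by
  have hs : ((2*c)⁻¹ * c) = (2:ℂ)⁻¹ := by field_simp
  rw [e, map_add, map_smul, map_smul, Algebra.TensorProduct.lmul'_apply_tmul,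
    Algebra.TensorProduct.lmul'_apply_tmul, x_sq' c, mul_one, smul_smul, hs, ← add_smul]
  norm_num

lemma smul_def (r : Cliff c ⊗[ℂ] Cliff c) (m : Cliff c) :
    r • m = Algebra.TensorProduct.lmul' ℂ (S := Cliff c) r * m := rfl

end CliffAux

/-- For `c ≠ 0`, the Clifford algebra `A = ℂ[X]/(X² - c)` is projective as a
module over its enveloping algebra `A ⊗[ℂ] A`. -/
theorem clifford_projective_over_enveloping (c : ℂ) (hc : c ≠ 0) :
    Module.Projective (Cliff c ⊗[ℂ] Cliff c) (Cliff c) := by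
  refine Module.Projective.of_split (M := Cliff c ⊗[ℂ] Cliff c)
    { toFun := fun m => (m ⊗ₜ 1) * CliffAux.e c
      map_add' := fun m n => by rw [add_tmul, add_mul]
      map_smul' := fun r m => by
        simp only [RingHom.id_apply, CliffAux.smul_def, smul_eq_mul]
        induction r using TensorProduct.induction_on with
        | zero =>
          rw [map_zero, zero_mul (M₀ := Cliff c), zero_tmul]
          ring
        | add p q hp hq =>
          rw [map_add, add_mul, add_tmul, add_mul, hp, hq]
          exact (add_mul p q _).symm
        | tmul a b =>
          rw [Algebra.TensorProduct.lmul'_apply_tmul]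
          have h1 : ((a * b * m) ⊗ₜ[ℂ] (1:Cliff c)) = ((a*m) ⊗ₜ[ℂ] (1:Cliff c)) * (b ⊗ₜ 1) := by
            rw [Algebra.TensorProduct.tmul_mul_tmul]
            exact congrArg₂ (· ⊗ₜ[ℂ] ·) (by ring) (mul_one 1).symm
          have h2 : (a ⊗ₜ[ℂ] b) * (m ⊗ₜ (1:Cliff c)) = ((a*m) ⊗ₜ[ℂ] (1:Cliff c)) * (1 ⊗ₜ b) := by
            rw [Algebra.TensorProduct.tmul_mul_tmul, Algebra.TensorProduct.tmul_mul_tmul]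
            exact congrArg₂ (· ⊗ₜ[ℂ] ·) (by ring) (by ring)
          calc ((a * b * m) ⊗ₜ[ℂ] (1:Cliff c)) * CliffAux.e c
              = ((a*m) ⊗ₜ[ℂ] (1:Cliff c)) * ((b ⊗ₜ 1) * CliffAux.e c) := by rw [h1]; ring
            _ = ((a*m) ⊗ₜ[ℂ] (1:Cliff c)) * ((1 ⊗ₜ b) * CliffAux.e c) := by
                  rw [CliffAux.swap c hc b]
            _ = (((a*m) ⊗ₜ[ℂ] (1:Cliff c)) * (1 ⊗ₜ b)) * CliffAux.e c := by ring
            _ = ((a ⊗ₜ[ℂ] b) * (m ⊗ₜ (1:Cliff c))) * CliffAux.e c := by rw [← h2]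
            _ = (a ⊗ₜ[ℂ] b) * ((m ⊗ₜ (1:Cliff c)) * CliffAux.e c) := by ring }
    { toFun := Algebra.TensorProduct.lmul' ℂ (S := Cliff c)
      map_add' := map_add _
      map_smul' := fun r z => by
        simp only [RingHom.id_apply, CliffAux.smul_def, smul_eq_mul, map_mul] }
    ?_
  ext m
  simp only [LinearMap.comp_apply, LinearMap.id_apply, LinearMap.coe_mk, AddHom.coe_mk,
    map_mul, Algebra.TensorProduct.lmul'_apply_tmul, CliffAux.lmul'_e c hc, mul_one]
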